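/- arXiv:1907.03889 — 3 statements merged into one kernel-verified Lean document; each statement's English description precedes it below -/
import Mathlib

section
/- For j = 1, …, M, let A_j ⊂ M(H_j) be sets of Borel probability measures, each closed under weak convergence of probability measures. Define C := { ν = ∏_{j=1}^M ν^j : ν^j ∈ A_j for j = 1, …, M } ⊂ M(∏_{j=1}^M H_j), the set of product measures with factors in the A_j. Then C is closed under weak convergence of probability measures on ∏_{j=1}^M H_j. -/
open MeasureTheory Filter Topology
open scoped ENNReal NNReal Classical

/-- The product probability measure `∏_{j} ν^j` on `∏_j H_j` with factors `ν j`. -/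
noncomputable def prodPM {M : ℕ} {H : Fin M → Type*} [∀ j, MeasurableSpace (H j)]
    (ν : ∀ j, ProbabilityMeasure (H j)) : ProbabilityMeasure (∀ j, H j) :=
  ⟨Measure.pi fun j => (ν j : Measure (H j)), inferInstance⟩

section Aux

open Set BoundedContinuousFunction

/-- The product of `[0,1]`-valued bounded continuous functions of the separate coordinates,
as a bounded continuous function on the product space. -/
noncomputable def prodBCF {M : ℕ} {H : Fin M → Type*} [∀ j, TopologicalSpace (H j)]
    (φ : ∀ j, H j →ᵇ ℝ≥0) (hφ : ∀ j x, φ j x ≤ 1) : (∀ j, H j) →ᵇ ℝ≥0 := by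
  refine ⟨⟨fun x => ∏ j, φ j (x j), ?_⟩, ⟨1, fun x y => ?_⟩⟩
  · exact continuous_finset_prod _ fun j _ => (φ j).continuous.comp (continuous_apply j)
  · have hx : (∏ j, φ j (x j)) ≤ 1 :=
      Finset.prod_le_one (fun _ _ => zero_le) (fun j _ => hφ j (x j))
    have hy : (∏ j, φ j (y j)) ≤ 1 :=
      Finset.prod_le_one (fun _ _ => zero_le) (fun j _ => hφ j (y j))
    rw [NNReal.dist_eq]
    have hx' : ((∏ j, φ j (x j) : ℝ≥0) : ℝ) ≤ 1 := by exact_mod_cast hx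
    have hy' : ((∏ j, φ j (y j) : ℝ≥0) : ℝ) ≤ 1 := by exact_mod_cast hy
    have hx0 : (0:ℝ) ≤ ((∏ j, φ j (x j) : ℝ≥0) : ℝ) := (∏ j, φ j (x j) : ℝ≥0).coe_nonneg
    have hy0 : (0:ℝ) ≤ ((∏ j, φ j (y j) : ℝ≥0) : ℝ) := (∏ j, φ j (y j) : ℝ≥0).coe_nonneg
    rw [abs_sub_le_iff]
    constructor <;> simp only [ContinuousMap.coe_mk] <;> linarith

@[simp] lemma prodBCF_apply {M : ℕ} {H : Fin M → Type*} [∀ j, TopologicalSpace (H j)]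
    (φ : ∀ j, H j →ᵇ ℝ≥0) (hφ : ∀ j x, φ j x ≤ 1) (x : ∀ j, H j) :
    prodBCF φ hφ x = ∏ j, φ j (x j) := rfl

/-- Finite products of `ℝ≥0∞`-valued functions converge if the factors converge to
finite limits. -/
lemma tendsto_finset_prod_ennreal {κ ι : Type*} {l : Filter κ} (s : Finset ι)
    (f : ι → κ → ℝ≥0∞) (a : ι → ℝ≥0∞) (h : ∀ i ∈ s, Tendsto (f i) l (𝓝 (a i)))
    (ha : ∀ i ∈ s, a i ≠ ⊤) :
    Tendsto (fun x => ∏ i ∈ s, f i x) l (𝓝 (∏ i ∈ s, a i)) := by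
  classical
  induction s using Finset.induction with
  | empty => simpa using tendsto_const_nhds
  | insert i s hnotmem ih =>
    simp only [Finset.prod_insert hnotmem]
    exact ENNReal.Tendsto.mul (h i (Finset.mem_insert_self i s))
      (Or.inr (ENNReal.prod_ne_top fun j hj => ha j (Finset.mem_insert_of_mem hj)))
      (ih (fun j hj => h j (Finset.mem_insert_of_mem hj))
        (fun j hj => ha j (Finset.mem_insert_of_mem hj)))
      (Or.inr (ha i (Finset.mem_insert_self i s)))

/-- Tonelli for a product of functions of the separate coordinates on a finite product space. -/
lemma lintegral_pi_prod {M : ℕ} {E : Fin M → Type*} [∀ i, MeasurableSpace (E i)]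
    (μ : ∀ i, Measure (E i)) [∀ i, SigmaFinite (μ i)] (f : ∀ i, E i → ℝ≥0∞)
    (hf : ∀ i, Measurable (f i)) :
    ∫⁻ x, ∏ i, f i (x i) ∂Measure.pi μ = ∏ i, ∫⁻ x, f i x ∂μ i := by
  induction M with
  | zero => simp [Measure.pi_empty_univ]
  | succ n ih =>
    have hmp := (MeasureTheory.measurePreserving_piFinSuccAbove μ 0).symm
    have mble : Measurable fun x : ∀ i, E i => ∏ i, f i (x i) :=
      Finset.measurable_prod _ fun i _ => (hf i).comp (measurable_pi_apply i)
    have key : ∫⁻ x, ∏ i, f i (x i) ∂Measure.pi μ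
        = ∫⁻ p : E 0 × (∀ j : Fin n, E (Fin.succ j)),
            f 0 p.1 * ∏ j, f (Fin.succ j) (p.2 j)
            ∂((μ 0).prod (Measure.pi fun j => μ (Fin.succ j))) := by
      rw [← hmp.lintegral_comp mble]
      apply lintegral_congr
      intro p
      rw [Fin.prod_univ_succ]
      have hsymm : (MeasurableEquiv.piFinSuccAbove E 0).symm p
          = Fin.insertNth 0 p.1 p.2 := rfl
      rw [hsymm]
      have h0 : Fin.insertNth 0 p.1 p.2 0 = p.1 := Fin.insertNth_apply_same 0 p.1 p.2
      have hsucc : ∀ j : Fin n, Fin.insertNth 0 p.1 p.2 (Fin.succ j) = p.2 j :=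
        fun j => Fin.insertNth_apply_succAbove 0 p.1 p.2 j
      rw [h0]
      exact congrArg _ (Finset.prod_congr rfl fun j _ => congrArg _ (hsucc j))
    rw [key, lintegral_prod_mul (μ := μ 0) (ν := Measure.pi fun j => μ (Fin.succ j))
      (f := f 0) (g := fun y : ∀ j : Fin n, E (Fin.succ j) => ∏ j, f (Fin.succ j) (y j))
      ((hf 0).aemeasurable)
      ((Finset.measurable_prod _ fun j _ =>
        (hf _).comp (measurable_pi_apply j)).aemeasurable),
      ih _ _ (fun j => hf _), Fin.prod_univ_succ]

/-- The `j`-th marginal of a product of probability measures is the `j`-th factor. -/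
lemma pi_map_eval {M : ℕ} {E : Fin M → Type*} [∀ i, MeasurableSpace (E i)]
    (μ : ∀ i, Measure (E i)) [∀ i, IsProbabilityMeasure (μ i)] (j : Fin M) :
    (Measure.pi μ).map (Function.eval j) = μ j := by
  ext s hs
  rw [Measure.map_apply (measurable_pi_apply j) hs, Set.eval_preimage, Measure.pi_pi]
  rw [Finset.prod_eq_single_of_mem j (Finset.mem_univ j)]
  · rw [Function.update_self]
  · intro i _ hij
    rw [Function.update_of_ne hij]
    exact measure_univ

/-- A probability measure on a finite product of (nice) spaces whose integrals of products
of `[0,1]`-valued bounded continuous functions of the separate coordinates factorize through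
the measures `g j` must be the product measure `Measure.pi g`. -/
lemma eq_pi_of_lintegral_prodBCF {M : ℕ} {H : Fin M → Type*}
    [∀ j, TopologicalSpace (H j)] [∀ j, TopologicalSpace.PseudoMetrizableSpace (H j)]
    [∀ j, MeasurableSpace (H j)] [∀ j, BorelSpace (H j)]
    [∀ j, SecondCountableTopology (H j)]
    (μ : Measure (∀ j, H j)) [IsProbabilityMeasure μ]
    (g : ∀ j, Measure (H j)) [∀ j, IsProbabilityMeasure (g j)]
    (h : ∀ (φ : ∀ j, H j →ᵇ ℝ≥0) (hφ : ∀ j x, φ j x ≤ 1),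
      ∫⁻ x, (prodBCF φ hφ x : ℝ≥0∞) ∂μ = ∏ j, ∫⁻ y, (φ j y : ℝ≥0∞) ∂(g j)) :
    μ = Measure.pi g := by
  have hgen : (by infer_instance : MeasurableSpace (∀ j, H j))
      = MeasurableSpace.generateFrom
        (Set.pi Set.univ '' Set.pi Set.univ fun j => {s : Set (H j) | IsClosed s}) := by
    refine (generateFrom_eq_pi (fun j => ?_) (fun j => ?_)).symm
    · rw [BorelSpace.measurable_eq (α := H j), borel_eq_generateFrom_isClosed]
    · exact ⟨fun _ => Set.univ, fun _ => isClosed_univ, Set.iUnion_const _⟩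
  refine ext_of_generate_finite _ hgen
    (IsPiSystem.pi fun j => isPiSystem_isClosed) ?_ (by simp)
  rintro _ ⟨s, hs, rfl⟩
  simp only [Set.mem_univ_pi, Set.mem_setOf_eq] at hs
  -- approximating sequences
  set φ : ℕ → ∀ j, H j →ᵇ ℝ≥0 := fun n j => (hs j).apprSeq n with hφdef
  have hφ1 : ∀ n j x, φ n j x ≤ 1 := fun n j x =>
    HasOuterApproxClosed.apprSeq_apply_le_one (hs j) n x
  -- limit against μ
  have lim₁ : Tendsto (fun n => ∫⁻ x, (prodBCF (φ n) (hφ1 n) x : ℝ≥0∞) ∂μ) atTop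
      (𝓝 (μ (Set.pi Set.univ s))) := by
    apply MeasureTheory.measure_of_cont_bdd_of_tendsto_indicator μ
      (MeasurableSet.univ_pi fun j => (hs j).measurableSet)
      (fun n => prodBCF (φ n) (hφ1 n)) (c := 1)
      (fun n x => Finset.prod_le_one (fun _ _ => zero_le) (fun j _ => hφ1 n j (x j)))
    rw [tendsto_pi_nhds]
    intro x
    have hfac : ∀ j, Tendsto (fun n => φ n j (x j)) atTop
        (𝓝 (Set.indicator (s j) (fun _ => (1:ℝ≥0)) (x j))) := by
      intro j
      have := HasOuterApproxClosed.tendsto_apprSeq (hs j)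
      rw [tendsto_pi_nhds] at this
      exact this (x j)
    have : Tendsto (fun n => ∏ j, φ n j (x j)) atTop
        (𝓝 (∏ j, Set.indicator (s j) (fun _ => (1:ℝ≥0)) (x j))) :=
      tendsto_finset_prod _ fun j _ => hfac j
    convert this using 2
    · rfl
    by_cases hx : x ∈ Set.pi Set.univ s
    · rw [Set.indicator_of_mem hx]
      rw [Finset.prod_congr rfl (fun j _ =>
        Set.indicator_of_mem (hx j (Set.mem_univ j)) _)]
      simp
    · rw [Set.indicator_of_notMem hx]
      rw [Set.mem_univ_pi] at hx
      push_neg at hx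
      obtain ⟨j, hj⟩ := hx
      exact (Finset.prod_eq_zero (Finset.mem_univ j)
        (by rw [Set.indicator_of_notMem hj])).symm
  -- limit of the factorized integrals
  have lim₂ : Tendsto (fun n => ∏ j, ∫⁻ y, ((φ n j y : ℝ≥0∞)) ∂(g j)) atTop
      (𝓝 (∏ j, g j (s j))) := by
    apply tendsto_finset_prod_ennreal
    · exact fun j _ => HasOuterApproxClosed.tendsto_lintegral_apprSeq (hs j) (g j)
    · exact fun j _ => measure_ne_top _ _
  have heq : (fun n => ∫⁻ x, (prodBCF (φ n) (hφ1 n) x : ℝ≥0∞) ∂μ)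
      = fun n => ∏ j, ∫⁻ y, ((φ n j y : ℝ≥0∞)) ∂(g j) := funext fun n => h (φ n) (hφ1 n)
  rw [heq] at lim₁
  rw [Measure.pi_pi]
  exact tendsto_nhds_unique lim₁ lim₂

end Aux

/-- **Closedness of the class of product measures.**
For `j = 1, …, M`, let `A_j ⊂ M(H_j)` be closed under weak convergence of probability
measures on the separable Hilbert space `H_j`.  Then the set
`C = { ∏_{j=1}^M ν^j : ν^j ∈ A_j }` of product measures with factors in the `A_j` is
closed under weak convergence of probability measures on `∏_{j=1}^M H_j`. -/
theorem isClosed_product_class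
    {M : ℕ} {H : Fin M → Type*}
    [∀ j, NormedAddCommGroup (H j)] [∀ j, InnerProductSpace ℝ (H j)]
    [∀ j, CompleteSpace (H j)] [∀ j, SecondCountableTopology (H j)]
    [∀ j, MeasurableSpace (H j)] [∀ j, BorelSpace (H j)]
    (A : ∀ j, Set (ProbabilityMeasure (H j))) (hA : ∀ j, IsClosed (A j)) :
    IsClosed { ν : ProbabilityMeasure (∀ j, H j) |
      ∃ f : ∀ j, ProbabilityMeasure (H j), (∀ j, f j ∈ A j) ∧ ν = prodPM f } := by
  apply IsSeqClosed.isClosed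
  intro u ν hu hlim
  choose F hFA hFeq using hu
  -- the marginals of ν
  set g : ∀ j, ProbabilityMeasure (H j) := fun j =>
    ν.map (f := Function.eval j) (continuous_apply j).measurable.aemeasurable with hgdef
  -- marginals of the sequence converge to the marginals of ν
  have hmarg : ∀ j, Tendsto (fun n => F n j) atTop (𝓝 (g j)) := by
    intro j
    have key : (fun n => F n j) = fun n =>
        (u n).map (f := Function.eval j) (continuous_apply j).measurable.aemeasurable := by
      funext n
      apply MeasureTheory.ProbabilityMeasure.toMeasure_injective
      rw [ProbabilityMeasure.toMeasure_map, hFeq n]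
      exact (pi_map_eval (fun i => (F n i : Measure (H i))) j).symm
    rw [key]
    exact ((ProbabilityMeasure.continuous_map (continuous_apply j)).tendsto ν).comp hlim
  have hgA : ∀ j, g j ∈ A j := fun j => (hA j).mem_of_tendsto (hmarg j)
    (Eventually.of_forall fun n => hFA n j)
  refine ⟨g, hgA, ?_⟩
  apply Subtype.ext
  show (ν : Measure (∀ j, H j)) = Measure.pi fun j => (g j : Measure (H j))
  apply eq_pi_of_lintegral_prodBCF
  intro φ hφ
  -- limits of integrals along the sequence
  have lim₁ : Tendsto (fun n => ∫⁻ x, (prodBCF φ hφ x : ℝ≥0∞) ∂(u n : Measure (∀ j, H j)))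
      atTop (𝓝 (∫⁻ x, (prodBCF φ hφ x : ℝ≥0∞) ∂(ν : Measure (∀ j, H j)))) :=
    ProbabilityMeasure.tendsto_iff_forall_lintegral_tendsto.mp hlim (prodBCF φ hφ)
  have heval : ∀ n, ∫⁻ x, (prodBCF φ hφ x : ℝ≥0∞) ∂(u n : Measure (∀ j, H j))
      = ∏ j, ∫⁻ y, (φ j y : ℝ≥0∞) ∂(F n j : Measure (H j)) := by
    intro n
    rw [hFeq n]
    show ∫⁻ x, (prodBCF φ hφ x : ℝ≥0∞) ∂(Measure.pi fun i => (F n i : Measure (H i))) = _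
    rw [← lintegral_pi_prod (fun i => (F n i : Measure (H i)))
      (fun j y => (φ j y : ℝ≥0∞))
      (fun j => (ENNReal.continuous_coe.comp (φ j).continuous).measurable)]
    congr 1
    ext x
    simp [ENNReal.coe_finset_prod]
  have lim₂ : Tendsto (fun n => ∏ j, ∫⁻ y, (φ j y : ℝ≥0∞) ∂(F n j : Measure (H j)))
      atTop (𝓝 (∏ j, ∫⁻ y, (φ j y : ℝ≥0∞) ∂(g j : Measure (H j)))) := by
    apply tendsto_finset_prod_ennreal
    · exact fun j _ => ProbabilityMeasure.tendsto_iff_forall_lintegral_tendsto.mp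
        (hmarg j) (φ j)
    · intro j _
      have hle : ∫⁻ y, (φ j y : ℝ≥0∞) ∂(g j : Measure (H j)) ≤ 1 := by
        have h1 := lintegral_mono (μ := (g j : Measure (H j)))
          (f := fun y => (φ j y : ℝ≥0∞)) (g := fun _ => 1)
          (fun y => by simpa using ENNReal.coe_le_coe.mpr (hφ j y))
        simpa using h1
      exact ne_top_of_le_ne_top ENNReal.one_ne_top hle
  simp_rw [heval] at lim₁
  exact tendsto_nhds_unique lim₁ lim₂
end

section
/- For every τ > 0 and every x ∈ ℝ, the Gaussian scale mixture with exponential mixing distribution on the variance yields the Laplace density: ∫_0^∞ (1/√(2πz)) exp(−x²/(2z)) · (1/τ) exp(−z/τ) dz = (1/2)·√(2/τ)·exp(−√(2/τ)·|x|). -/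
open MeasureTheory Real
open scoped Real

open Set

lemma image_inv_scale (k : ℝ) (hk : 0 < k) : (fun u : ℝ => k / u) '' Ioi 0 = Ioi 0 := by
  ext t
  constructor
  · rintro ⟨u, hu, rfl⟩; exact div_pos hk hu
  · intro ht
    exact ⟨k / t, div_pos hk ht, by field_simp⟩

lemma integral_inv_scale (k : ℝ) (hk : 0 < k) (g : ℝ → ℝ) :
    ∫ u in Ioi (0:ℝ), g u = ∫ u in Ioi (0:ℝ), (k / u ^ 2) * g (k / u) := by
  conv_lhs => rw [← image_inv_scale k hk]
  rw [integral_image_eq_integral_abs_deriv_smul (f' := fun u => -(k / u ^ 2))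
      measurableSet_Ioi (fun u hu => ?_) (fun u hu v hv h => ?_) g]
  · refine setIntegral_congr_fun measurableSet_Ioi (fun u hu => ?_)
    have hu' : (0:ℝ) < u := hu
    rw [smul_eq_mul, abs_neg, abs_of_pos (div_pos hk (pow_pos hu' 2))]
  · have hu' : (0:ℝ) < u := hu
    have := (hasDerivAt_inv hu'.ne').const_mul k
    simpa [div_eq_mul_inv, mul_comm, mul_left_comm, neg_div] using this.hasDerivWithinAt
  · have hu' : (0:ℝ) < u := hu
    have hv' : (0:ℝ) < v := hv
    have h' : k / u = k / v := h
    rw [div_eq_div_iff hu'.ne' hv'.ne'] at h'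
    exact (mul_left_cancel₀ hk.ne' h').symm

lemma glasser_cont {a b : ℝ} :
    ContinuousOn (fun u : ℝ => Real.exp (-(a * u ^ 2) - b / u ^ 2)) (Ioi 0) := by
  apply Real.continuous_exp.comp_continuousOn
  apply ContinuousOn.sub (by fun_prop)
  exact continuousOn_const.div (by fun_prop) (fun u hu => pow_ne_zero 2 (ne_of_gt hu))

lemma glasser_int {a b : ℝ} (ha : 0 < a) (hb : 0 ≤ b) :
    IntegrableOn (fun u : ℝ => Real.exp (-(a * u ^ 2) - b / u ^ 2)) (Ioi 0) := by
  have hgauss : IntegrableOn (fun u : ℝ => Real.exp (-(a * u ^ 2))) (Ioi 0) := by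
    have := integrable_exp_neg_mul_sq ha
    simpa [neg_mul] using this.integrableOn
  refine hgauss.mono' (glasser_cont.aestronglyMeasurable measurableSet_Ioi) ?_
  filter_upwards [ae_restrict_mem measurableSet_Ioi] with u hu
  rw [Real.norm_eq_abs, abs_of_pos (Real.exp_pos _)]
  apply Real.exp_le_exp.2
  have : 0 ≤ b / u ^ 2 := div_nonneg hb (pow_pos hu 2).le
  linarith

lemma glasser_int2 {a b : ℝ} (ha : 0 < a) (hb : 0 < b) :
    IntegrableOn (fun u : ℝ => (1 / u ^ 2) * Real.exp (-(a * u ^ 2) - b / u ^ 2)) (Ioi 0) := by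
  have hgauss : IntegrableOn (fun u : ℝ => (1 / b) * Real.exp (-(a * u ^ 2))) (Ioi 0) := by
    have : IntegrableOn (fun u : ℝ => (1/b) * Real.exp (-a * u ^ 2)) (Ioi 0) :=
      (integrable_exp_neg_mul_sq ha).integrableOn.const_mul (1/b)
    simpa [neg_mul] using this
  have hm : AEStronglyMeasurable (fun u : ℝ => (1 / u ^ 2) * Real.exp (-(a * u ^ 2) - b / u ^ 2))
      (volume.restrict (Ioi 0)) := by
    apply ContinuousOn.aestronglyMeasurable ?_ measurableSet_Ioi
    exact (continuousOn_const.div (by fun_prop)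
      (fun u hu => pow_ne_zero 2 (ne_of_gt hu))).mul glasser_cont
  refine hgauss.mono' hm ?_
  filter_upwards [ae_restrict_mem measurableSet_Ioi] with u hu
  have hu2 : (0:ℝ) < u ^ 2 := pow_pos hu 2
  rw [Real.norm_eq_abs, abs_of_pos (by positivity)]
  have key : (1 / u ^ 2) * Real.exp (-(b / u ^ 2)) ≤ 1 / b := by
    set s : ℝ := b / u ^ 2 with hs
    have hs0 : 0 < s := div_pos hb hu2
    have h1 : s * Real.exp (-s) ≤ 1 := by
      have h2 : s ≤ Real.exp s := le_trans (by linarith) (Real.add_one_le_exp s)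
      calc s * Real.exp (-s) ≤ Real.exp s * Real.exp (-s) :=
            mul_le_mul_of_nonneg_right h2 (Real.exp_pos _).le
        _ = 1 := by rw [← Real.exp_add]; simp
    have : (1 / u ^ 2) = s / b := by rw [hs]; field_simp
    rw [this, div_mul_eq_mul_div, div_le_div_iff₀ hb hb]
    nlinarith
  calc (1 / u ^ 2) * Real.exp (-(a * u ^ 2) - b / u ^ 2)
      = ((1 / u ^ 2) * Real.exp (-(b / u ^ 2))) * Real.exp (-(a * u ^ 2)) := by
        rw [show -(a*u^2) - b/u^2 = (-(b/u^2)) + (-(a*u^2)) by ring, Real.exp_add]; ring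
    _ ≤ (1 / b) * Real.exp (-(a * u ^ 2)) := by
        exact mul_le_mul_of_nonneg_right key (Real.exp_pos _).le

lemma glasser {a b : ℝ} (ha : 0 < a) (hb : 0 ≤ b) :
    ∫ u in Ioi (0:ℝ), Real.exp (-(a * u ^ 2) - b / u ^ 2)
      = (1/2) * Real.sqrt (π / a) * Real.exp (-2 * Real.sqrt (a * b)) := by
  rcases hb.eq_or_lt with rfl | hb
  · have : (∫ u in Ioi (0:ℝ), Real.exp (-(a * u ^ 2) - 0 / u ^ 2))
        = ∫ u in Ioi (0:ℝ), Real.exp (-a * u ^ 2) := by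
      refine setIntegral_congr_fun measurableSet_Ioi (fun u hu => ?_)
      rw [show -(a * u ^ 2) - 0 / u ^ 2 = -a * u ^ 2 by rw [zero_div]; ring]
    rw [this, integral_gaussian_Ioi]
    simp [Real.sqrt_eq_zero']
    ring
  · -- notation
    set sa := Real.sqrt a with hsa
    set sb := Real.sqrt b with hsb
    have hsa0 : 0 < sa := Real.sqrt_pos.2 ha
    have hsb0 : 0 < sb := Real.sqrt_pos.2 hb
    have hsa2 : sa ^ 2 = a := Real.sq_sqrt ha.le
    have hsb2 : sb ^ 2 = b := Real.sq_sqrt hb.le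
    set k := sb / sa with hk
    have hk0 : 0 < k := div_pos hsb0 hsa0
    set g := fun u : ℝ => Real.exp (-(a * u ^ 2) - b / u ^ 2) with hg
    set J := ∫ u in Ioi (0:ℝ), g u with hJ
    set K := ∫ u in Ioi (0:ℝ), (1 / u ^ 2) * g u with hK
    -- step 1 : J = k * K
    have hswap : J = k * K := by
      rw [hJ, integral_inv_scale k hk0 g, hK, ← integral_const_mul]
      refine setIntegral_congr_fun measurableSet_Ioi (fun u hu => ?_)
      have hu' : (0:ℝ) < u := hu
      have hgk : g (k / u) = g u := by
        have h1 : a * (k / u) ^ 2 = b / u ^ 2 := by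
          rw [hk, div_pow, div_pow]
          rw [← hsa2, ← hsb2]; field_simp
        have h2 : b / (k / u) ^ 2 = a * u ^ 2 := by
          rw [hk, div_pow, div_pow]
          rw [← hsa2, ← hsb2]
          field_simp
        have hexp : -(a * (k / u) ^ 2) - b / (k / u) ^ 2 = -(a * u ^ 2) - b / u ^ 2 := by
          rw [h1, h2]; ring
        simp only [hg]
        rw [hexp]
      rw [hgk]; ring
    -- step 2 : gaussian integral via main substitution
    have himg : (fun u : ℝ => sa * u - sb / u) '' Ioi 0 = univ := by
      apply eq_univ_of_forall
      intro t
      set r := Real.sqrt (t ^ 2 + 4 * (sa * sb)) with hr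
      have hr2 : r ^ 2 = t ^ 2 + 4 * (sa * sb) := Real.sq_sqrt (by nlinarith)
      have hrt : |t| < r := by
        have : Real.sqrt (t ^ 2) < r := by
          apply Real.sqrt_lt_sqrt (sq_nonneg t); nlinarith
        simpa [Real.sqrt_sq_eq_abs] using this
      set u := (t + r) / (2 * sa) with hu
      have hu0 : 0 < u := by
        apply div_pos _ (by positivity)
        have := neg_abs_le t
        linarith
      refine ⟨u, hu0, ?_⟩
      have hquad : sa * u ^ 2 - t * u - sb = 0 := by
        rw [hu]; field_simp; nlinarith
      have : sa * u - sb / u = t := by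
        field_simp
        nlinarith
      exact this
    have hinj : InjOn (fun u : ℝ => sa * u - sb / u) (Ioi 0) := by
      intro u hu v hv h
      have hu' : (0:ℝ) < u := hu
      have hv' : (0:ℝ) < v := hv
      simp only at h
      have h2 : (u - v) * (sa * u * v + sb) = 0 := by
        field_simp at h; nlinarith
      have h3 : 0 < sa * u * v + sb := by positivity
      have := mul_eq_zero.1 h2
      rcases this with h4 | h4
      · linarith
      · linarith
    have hmain : Real.sqrt π
        = ∫ u in Ioi (0:ℝ), |sa + sb / u ^ 2| * Real.exp (-(sa * u - sb / u) ^ 2) := by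
      have hgauss : (∫ t : ℝ, Real.exp (-t ^ 2)) = Real.sqrt π := by
        simpa using integral_gaussian 1
      rw [← hgauss, ← setIntegral_univ, ← himg,
        integral_image_eq_integral_abs_deriv_smul (f' := fun u => sa + sb / u ^ 2)
          measurableSet_Ioi (fun u hu => ?_) hinj (fun t => Real.exp (-t ^ 2))]
      · simp [smul_eq_mul]
      · have hu' : (0:ℝ) < u := hu
        have h1 : HasDerivAt (fun w : ℝ => sa * w - sb / w) (sa + sb / u ^ 2) u := by
          have := ((hasDerivAt_id u).const_mul sa).sub ((hasDerivAt_inv hu'.ne').const_mul sb)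
          have e : sa + sb / u ^ 2 = sa * 1 - sb * -(u ^ 2)⁻¹ := by ring
          rw [e]; exact this
        exact h1.hasDerivWithinAt
    set E := Real.exp (2 * (sa * sb)) with hE
    have hE0 : 0 < E := Real.exp_pos _
    have hsplit : ∀ u ∈ Ioi (0:ℝ),
        |sa + sb / u ^ 2| * Real.exp (-(sa * u - sb / u) ^ 2)
        = E * (sa * g u) + E * (sb * ((1 / u ^ 2) * g u)) := by
      intro u hu
      have hu' : (0:ℝ) < u := hu
      have habs : |sa + sb / u ^ 2| = sa + sb / u ^ 2 := abs_of_pos (by positivity)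
      have hsq : -(sa * u - sb / u) ^ 2 = (2 * (sa * sb)) + (-(a * u ^ 2) - b / u ^ 2) := by
        have h5 : (sa * u - sb / u) ^ 2 = sa ^ 2 * u ^ 2 - 2 * (sa * sb) + sb ^ 2 / u ^ 2 := by
          field_simp; ring
        rw [h5, hsa2, hsb2]; ring
      rw [habs, hsq, Real.exp_add, hE]
      simp only [hg]
      ring
    have heq2 : Real.sqrt π = E * sa * J + E * sb * K := by
      rw [hmain, setIntegral_congr_fun measurableSet_Ioi hsplit, integral_add
        (((glasser_int ha hb.le).const_mul sa).const_mul E)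
        (((glasser_int2 ha hb).const_mul sb).const_mul E),
        integral_const_mul, integral_const_mul, integral_const_mul, integral_const_mul,
        hJ, hK]
      ring
    have hsbK : E * sb * K = E * sa * J := by
      rw [hswap, hk]
      field_simp
    have heq3 : Real.sqrt π = 2 * (E * sa * J) := by rw [heq2, hsbK]; ring
    have hab : Real.sqrt (a * b) = sa * sb := Real.sqrt_mul ha.le b
    have hpa : Real.sqrt (π / a) = Real.sqrt π / sa := Real.sqrt_div Real.pi_pos.le a
    rw [hpa, hab, show (-2 : ℝ) * (sa * sb) = -(2 * (sa * sb)) by ring,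
      Real.exp_neg, ← hE, heq3]
    field_simp
/-- **Gaussian scale mixture representation of the Laplace density.**
For every `τ > 0` and every `x ∈ ℝ`,
`∫_0^∞ (1/√(2πz)) exp(−x²/(2z)) · (1/τ) exp(−z/τ) dz = (1/2)√(2/τ) exp(−√(2/τ)|x|)`. -/
theorem gaussian_scale_mixture_exponential_eq_laplace (τ : ℝ) (hτ : 0 < τ) (x : ℝ) :
    (∫ z in Set.Ioi (0 : ℝ),
        (1 / Real.sqrt (2 * π * z)) * Real.exp (-x ^ 2 / (2 * z)) *
          ((1 / τ) * Real.exp (-z / τ)))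
      = (1 / 2) * Real.sqrt (2 / τ) * Real.exp (-(Real.sqrt (2 / τ)) * |x|) := by
  have h2π : (0:ℝ) < 2 * π := by positivity
  have himg : (fun u : ℝ => u ^ 2) '' Ioi 0 = Ioi 0 := by
    ext z; constructor
    · rintro ⟨u, hu, rfl⟩; exact pow_pos (mem_Ioi.mp hu) 2
    · intro hz; exact ⟨Real.sqrt z, Real.sqrt_pos.2 hz, Real.sq_sqrt (le_of_lt hz)⟩
  have hsub : (∫ z in Set.Ioi (0 : ℝ),
        (1 / Real.sqrt (2 * π * z)) * Real.exp (-x ^ 2 / (2 * z)) *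
          ((1 / τ) * Real.exp (-z / τ)))
      = ∫ u in Ioi (0:ℝ), (2 / (τ * Real.sqrt (2 * π))) *
          Real.exp (-((1/τ) * u ^ 2) - (x ^ 2 / 2) / u ^ 2) := by
    conv_lhs => rw [← himg]
    rw [integral_image_eq_integral_abs_deriv_smul (f' := fun u => 2 * u)
        measurableSet_Ioi (fun u hu => ?_) (fun u hu v hv h => ?_) _]
    · refine setIntegral_congr_fun measurableSet_Ioi (fun u hu => ?_)
      have hu' : (0:ℝ) < u := hu
      have hs : Real.sqrt (2 * π * u ^ 2) = Real.sqrt (2 * π) * u := by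
        rw [Real.sqrt_mul h2π.le, Real.sqrt_sq hu'.le]
      have he : Real.exp (-x ^ 2 / (2 * u ^ 2)) * Real.exp (-(u ^ 2) / τ)
          = Real.exp (-((1/τ) * u ^ 2) - (x ^ 2 / 2) / u ^ 2) := by
        rw [← Real.exp_add]; congr 1; field_simp; ring
      rw [smul_eq_mul, abs_of_pos (by positivity : (0:ℝ) < 2 * u), hs, ← he]
      have hsq : (0:ℝ) < Real.sqrt (2 * π) := Real.sqrt_pos.2 h2π
      field_simp
    · have hu' : (0:ℝ) < u := hu
      simpa using (hasDerivAt_pow 2 u).hasDerivWithinAt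
    · have hu' : (0:ℝ) < u := hu
      have hv' : (0:ℝ) < v := hv
      have h2 : (u - v) * (u + v) = 0 := by linear_combination h
      rcases mul_eq_zero.1 h2 with h3 | h3
      · linarith
      · linarith
  rw [hsub, integral_const_mul,
    glasser (a := 1/τ) (b := x ^ 2 / 2) (by positivity) (by positivity)]
  have he2 : (-2 : ℝ) * Real.sqrt (1/τ * (x ^ 2 / 2)) = -(Real.sqrt (2/τ)) * |x| := by
    have h1 : (2:ℝ) * Real.sqrt (1/τ * (x ^ 2 / 2)) = Real.sqrt (2/τ) * |x| := by
      have l : (2:ℝ) * Real.sqrt (1/τ * (x ^ 2 / 2))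
          = Real.sqrt (2 ^ 2 * (1/τ * (x ^ 2 / 2))) := by
        rw [Real.sqrt_mul (by positivity : (0:ℝ) ≤ 2 ^ 2),
          Real.sqrt_sq (by norm_num : (0:ℝ) ≤ 2)]
      rw [l, show (2:ℝ) ^ 2 * (1/τ * (x ^ 2 / 2)) = (2/τ) * x ^ 2 by ring,
        Real.sqrt_mul (by positivity : (0:ℝ) ≤ 2/τ), Real.sqrt_sq_eq_abs]
    linarith
  rw [he2, show π / (1/τ) = π * τ by field_simp]
  have hc : (2 / (τ * Real.sqrt (2 * π))) * ((1/2) * Real.sqrt (π * τ))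
      = (1/2) * Real.sqrt (2/τ) := by
    have h2 : Real.sqrt 2 * Real.sqrt 2 = 2 := Real.mul_self_sqrt (by norm_num)
    have ht : Real.sqrt τ * Real.sqrt τ = τ := Real.mul_self_sqrt hτ.le
    have hp0 : 0 < Real.sqrt π := Real.sqrt_pos.2 Real.pi_pos
    have ht0 : 0 < Real.sqrt τ := Real.sqrt_pos.2 hτ
    have h20 : 0 < Real.sqrt 2 := Real.sqrt_pos.2 (by norm_num)
    rw [Real.sqrt_mul Real.pi_pos.le, Real.sqrt_mul (by norm_num : (0:ℝ) ≤ 2),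
      Real.sqrt_div (by norm_num : (0:ℝ) ≤ 2) τ]
    field_simp
    linear_combination 2 * ht - τ * h2
  linear_combination Real.exp (-(Real.sqrt (2/τ)) * |x|) * hc
end

section
/- Let τ > 0 and a > 0, and set m = √(2/(τa)) and ζ = 2/τ. Let μ_0^w be the probability measure on (0, ∞) with Lebesgue density w ↦ (1/τ) exp(−1/(τw)) · (1/w²). Then the probability measure ν^w on (0, ∞) obtained by reweighting μ_0^w with the unnormalized density w ↦ w^{1/2} exp(−(a/2) w) (normalized to total mass one) is the inverse Gaussian distribution IG(m, ζ), i.e., ν^w has Lebesgue density w ↦ √(ζ/(2π w³)) · exp(−ζ (w − m)² / (2 m² w)) on (0, ∞). In particular ∫_0^∞ w^{−3/2} exp(−(a/2)w − 1/(τw)) dw = √(πτ) · exp(−√(2a/τ)). -/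
open MeasureTheory Real
open scoped ENNReal Real

lemma odd_integral_zero (f : ℝ → ℝ) (hf : ∀ x, f (-x) = - f x) :
    ∫ x : ℝ, f x = 0 := by
  have A : MeasurableEmbedding fun x : ℝ => -x :=
    (Homeomorph.neg ℝ).isClosedEmbedding.measurableEmbedding
  have h1 : ∫ x : ℝ, f (-x) = ∫ x : ℝ, f x := by
    conv_rhs => rw [← Measure.map_neg_eq_self (volume : Measure ℝ)]
    exact (A.integral_map f).symm
  have h2 : ∫ x : ℝ, f (-x) = - ∫ x : ℝ, f x := by
    simp_rw [hf]; exact integral_neg f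
  linarith

lemma glasser_s15 (q c : ℝ) (hq : 0 < q) (hc : 0 < c) :
    ∫ t in Set.Ioi (0:ℝ), Real.exp (-(q*t^2) - q*c^2/t^2)
      = (1/2) * Real.sqrt (π/q) * Real.exp (-(2*q*c)) := by
  have hrpos : ∀ s : ℝ, 0 < Real.sqrt (s^2 + 4*c) :=
    fun s => Real.sqrt_pos.2 (by positivity)
  have hrsq : ∀ s : ℝ, Real.sqrt (s^2 + 4*c) ^ 2 = s^2 + 4*c :=
    fun s => Real.sq_sqrt (by positivity)
  have habs : ∀ s : ℝ, |s| < Real.sqrt (s^2 + 4*c) := by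
    intro s
    rw [← Real.sqrt_sq_eq_abs]
    exact Real.sqrt_lt_sqrt (sq_nonneg s) (by linarith)
  set ψ : ℝ → ℝ := fun s => (s + Real.sqrt (s^2 + 4*c))/2 with hψdef
  have hψpos : ∀ s, 0 < ψ s := by
    intro s
    have h1 := habs s
    have h2 := neg_abs_le s
    simp only [hψdef]
    nlinarith
  have hψsq : ∀ s, ψ s ^ 2 = s * ψ s + c := by
    intro s
    have := hrsq s
    simp only [hψdef]
    nlinarith
  have hinj : Set.InjOn ψ Set.univ := by
    intro x _ y _ h
    have hx := hψsq x
    have hy := hψsq y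
    rw [h] at hx
    have hyp := hψpos y
    have : x * ψ y = y * ψ y := by linarith
    exact mul_right_cancel₀ (ne_of_gt hyp) this
  have himg : ψ '' Set.univ = Set.Ioi (0:ℝ) := by
    apply Set.Subset.antisymm
    · rintro _ ⟨s, -, rfl⟩; exact hψpos s
    · rintro t ht
      have ht' : (0:ℝ) < t := ht
      refine ⟨t - c/t, trivial, ?_⟩
      have h1 : Real.sqrt ((t - c/t)^2 + 4*c) = t + c/t := by
        have he : (t - c/t)^2 + 4*c = (t + c/t)^2 := by field_simp; ring
        rw [he, Real.sqrt_sq (by positivity)]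
      simp only [hψdef, h1]
      field_simp
      ring
  -- derivative
  have hderiv : ∀ s, HasDerivAt ψ ((1 + s / Real.sqrt (s^2 + 4*c))/2) s := by
    intro s
    have h1 : HasDerivAt (fun s : ℝ => s^2 + 4*c) (2*s) s := by
      simpa using (hasDerivAt_pow 2 s).add_const (4*c)
    have h2 : HasDerivAt (fun s : ℝ => Real.sqrt (s^2 + 4*c))
        (2*s / (2 * Real.sqrt (s^2 + 4*c))) s :=
      h1.sqrt (by positivity)
    have h3 : 2*s / (2 * Real.sqrt (s^2 + 4*c)) = s / Real.sqrt (s^2 + 4*c) := by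
      rw [mul_div_mul_left _ _ (two_ne_zero)]
    rw [h3] at h2
    simpa [hψdef] using ((hasDerivAt_id s).add h2).div_const 2
  have hsub := integral_image_eq_integral_abs_deriv_smul (MeasurableSet.univ)
    (fun x _ => (hderiv x).hasDerivWithinAt)
    hinj (fun w => Real.exp (-(q*w^2) - q*c^2/w^2))
  rw [himg, Measure.restrict_univ] at hsub
  rw [hsub]
  have hpt : ∀ s : ℝ, |(1 + s / Real.sqrt (s^2 + 4*c))/2| •
      Real.exp (-(q * ψ s ^2) - q*c^2/ψ s ^2)
      = Real.exp (-(2*q*c)) * ((1/2) * Real.exp (-(q*s^2))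
          + (1/2) * (s / Real.sqrt (s^2 + 4*c) * Real.exp (-(q*s^2)))) := by
    intro s
    have hr := hrpos s
    have hψp := hψpos s
    have hψs := hψsq s
    have key : ψ s ^ 2 + c^2 / ψ s ^2 = s^2 + 2*c := by
      have hne : ψ s ≠ 0 := ne_of_gt hψp
      field_simp
      nlinarith
    have harg : -(q * ψ s ^2) - q*c^2/ψ s ^2 = -(q*s^2) + -(2*q*c) := by
      have : q * ψ s ^ 2 + q*c^2/ψ s^2 = q * (ψ s ^2 + c^2/ψ s ^2) := by ring
      have h2 : q * ψ s ^ 2 + q*c^2/ψ s^2 = q*s^2 + 2*q*c := by rw [this, key]; ring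
      linarith
    have habs' : |(1 + s / Real.sqrt (s^2 + 4*c))/2| = (1 + s / Real.sqrt (s^2 + 4*c))/2 := by
      apply abs_of_nonneg
      have h1 : -1 ≤ s / Real.sqrt (s^2 + 4*c) := by
        rw [le_div_iff₀ hr]
        have := habs s
        have := neg_abs_le s
        linarith
      linarith
    rw [harg, Real.exp_add, habs', smul_eq_mul]
    ring
  simp_rw [hpt]
  have hI1 : Integrable (fun s : ℝ => (1/2) * Real.exp (-(q*s^2))) := by
    have := integrable_exp_neg_mul_sq hq
    simp_rw [neg_mul] at this
    exact this.const_mul _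
  have hI2 : Integrable (fun s : ℝ => s / Real.sqrt (s^2 + 4*c) * Real.exp (-(q*s^2))) := by
    have hg : Integrable (fun s : ℝ => Real.exp (-(q*s^2))) := by
      have := integrable_exp_neg_mul_sq hq
      simp_rw [neg_mul] at this
      exact this
    apply hg.mono'
    · apply Continuous.aestronglyMeasurable
      apply Continuous.mul
      · exact continuous_id.div (Real.continuous_sqrt.comp (by continuity))
          (fun s => ne_of_gt (hrpos s))
      · exact Real.continuous_exp.comp (by continuity)
    · filter_upwards with s
      rw [norm_mul, Real.norm_eq_abs, Real.norm_eq_abs, abs_of_nonneg (Real.exp_nonneg _),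
        abs_div, abs_of_nonneg (Real.sqrt_nonneg _)]
      have h1 : |s| / Real.sqrt (s^2+4*c) ≤ 1 := by
        rw [div_le_one (hrpos s)]
        exact le_of_lt (habs s)
      nlinarith [Real.exp_nonneg (-(q*s^2)), h1]
  have hodd : ∫ s : ℝ, s / Real.sqrt (s^2 + 4*c) * Real.exp (-(q*s^2)) = 0 := by
    apply odd_integral_zero
    intro x
    simp only [neg_sq, neg_div, neg_mul]
  have hgauss : ∫ s : ℝ, Real.exp (-(q*s^2)) = Real.sqrt (π/q) := by
    simp_rw [← neg_mul]
    exact integral_gaussian q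
  rw [integral_const_mul, integral_add hI1 (hI2.const_mul _), integral_const_mul,
    integral_const_mul, hodd, hgauss]
  ring

lemma rpow_neg32 (w : ℝ) (hw : 0 < w) : w ^ (-(3:ℝ)/2) = Real.sqrt w / w^2 := by
  rw [Real.sqrt_eq_rpow, show (w:ℝ)^2 = w ^ (2:ℝ) by rw [← Real.rpow_natCast w 2]; norm_num,
    ← Real.rpow_sub hw]
  norm_num

lemma inv_sq_subst (p q : ℝ) :
    ∫ w in Set.Ioi (0:ℝ), w ^ (-(3:ℝ)/2) * Real.exp (-(p*w) - q/w)
      = 2 * ∫ t in Set.Ioi (0:ℝ), Real.exp (-(q*t^2) - p/t^2) := by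
  set f : ℝ → ℝ := fun t => (t^2)⁻¹ with hfdef
  have hinj : Set.InjOn f (Set.Ioi 0) := by
    intro x hx y hy h
    have hx' : (0:ℝ) < x := hx
    have hy' : (0:ℝ) < y := hy
    simp only [hfdef] at h
    have h2 : x^2 = y^2 := by
      have := inv_injective h
      exact this
    nlinarith
  have himg : f '' Set.Ioi 0 = Set.Ioi (0:ℝ) := by
    apply Set.Subset.antisymm
    · rintro _ ⟨t, ht, rfl⟩
      have ht' : (0:ℝ) < t := ht
      simp only [hfdef, Set.mem_Ioi]
      positivity
    · rintro w hw
      have hw' : (0:ℝ) < w := hw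
      refine ⟨(Real.sqrt w)⁻¹, Set.mem_Ioi.2 (by positivity), ?_⟩
      simp only [hfdef]
      rw [inv_pow, inv_inv, Real.sq_sqrt hw'.le]
  have hderiv : ∀ t ∈ Set.Ioi (0:ℝ), HasDerivWithinAt f (-(2*t) / (t^2)^2) (Set.Ioi 0) t := by
    intro t ht
    have ht' : (0:ℝ) < t := ht
    have h1 : HasDerivAt f (-(2*t) / (t^2)^2) t := by
      have h0 := (hasDerivAt_pow 2 t).inv (pow_ne_zero 2 (ne_of_gt ht'))
      have h0' : HasDerivAt f (-(↑2 * t ^ (2 - 1)) / (t ^ 2) ^ 2) t := h0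
      convert h0' using 1
      norm_num
    exact h1.hasDerivWithinAt
  have hsub := integral_image_eq_integral_abs_deriv_smul measurableSet_Ioi hderiv hinj
    (fun w => w ^ (-(3:ℝ)/2) * Real.exp (-(p*w) - q/w))
  rw [himg] at hsub
  rw [hsub]
  rw [show (2:ℝ) * ∫ t in Set.Ioi (0:ℝ), Real.exp (-(q*t^2) - p/t^2)
      = ∫ t in Set.Ioi (0:ℝ), 2 * Real.exp (-(q*t^2) - p/t^2) from
    (integral_const_mul 2 _).symm]
  apply setIntegral_congr_fun measurableSet_Ioi
  intro t ht
  have ht' : (0:ℝ) < t := ht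
  have hrp : f t ^ (-(3:ℝ)/2) = t^3 := by
    rw [rpow_neg32 _ (by simp only [hfdef]; positivity)]
    simp only [hfdef]
    rw [Real.sqrt_inv, Real.sqrt_sq ht'.le]
    field_simp
  have harg : -(p * f t) - q / f t = -(q*t^2) - p/t^2 := by
    simp only [hfdef]
    field_simp
    ring
  simp only [smul_eq_mul, hrp, harg]
  rw [abs_div, abs_neg, abs_of_nonneg (by positivity : (0:ℝ) ≤ 2*t),
    abs_of_nonneg (by positivity : (0:ℝ) ≤ (t^2)^2)]
  field_simp

lemma keyint (p q : ℝ) (hp : 0 < p) (hq : 0 < q) :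
    ∫ w in Set.Ioi (0:ℝ), w ^ (-(3:ℝ)/2) * Real.exp (-(p*w) - q/w)
      = Real.sqrt (π/q) * Real.exp (-(2 * Real.sqrt (p*q))) := by
  set c := Real.sqrt (p/q) with hcdef
  have hc : 0 < c := Real.sqrt_pos.2 (div_pos hp hq)
  have hqc : q * c^2 = p := by
    rw [hcdef, Real.sq_sqrt (div_pos hp hq).le]
    field_simp
  have h2 : 2*q*c = 2 * Real.sqrt (p*q) := by
    have : q * c = Real.sqrt (p*q) := by
      rw [← Real.sqrt_sq hq.le, hcdef, ← Real.sqrt_mul (sq_nonneg q)]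
      congr 1
      field_simp
      ring
      exact (Real.sqrt_sq hq.le).symm
    linarith
  rw [inv_sq_subst p q, ← h2, ← hqc]
  have : (fun t : ℝ => Real.exp (-(q*t^2) - q*c^2/t^2))
      = fun t : ℝ => Real.exp (-(q*t^2) - q*c^2/t^2) := rfl
  rw [glasser_s15 q c hq hc]
  ring

/-- **Reweighting the inverse-exponential law gives the inverse Gaussian distribution.**
Let `τ > 0`, `a > 0`, `m = √(2/(τa))`, `ζ = 2/τ`, and let `μ_0^w` be the measure on
`(0,∞)` with Lebesgue density `w ↦ (1/τ) exp(−1/(τw)) (1/w²)`.  Then reweighting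
`μ_0^w` with the unnormalized density `w ↦ w^{1/2} exp(−(a/2)w)` gives the inverse
Gaussian distribution `IG(m, ζ)`, with Lebesgue density
`w ↦ √(ζ/(2πw³)) exp(−ζ(w−m)²/(2m²w))` on `(0,∞)`.  In particular,
`∫_0^∞ w^{−3/2} exp(−(a/2)w − 1/(τw)) dw = √(πτ) exp(−√(2a/τ))`. -/
theorem reweight_inverse_exponential_eq_inverseGaussian
    (τ a m ζ : ℝ) (hτ : 0 < τ) (ha : 0 < a)
    (hm : m = Real.sqrt (2 / (τ * a))) (hζ : ζ = 2 / τ) :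
    (((volume.restrict (Set.Ioi (0 : ℝ))).withDensity
        (fun w => ENNReal.ofReal ((1 / τ) * Real.exp (-(1 / (τ * w))) * (1 / w ^ 2)))).withDensity
      (fun w => ENNReal.ofReal ((Real.sqrt w * Real.exp (-(a / 2) * w)) /
        ∫ v, Real.sqrt v * Real.exp (-(a / 2) * v)
          ∂((volume.restrict (Set.Ioi (0 : ℝ))).withDensity
            (fun u => ENNReal.ofReal ((1 / τ) * Real.exp (-(1 / (τ * u))) * (1 / u ^ 2)))))))
      = (volume.restrict (Set.Ioi (0 : ℝ))).withDensity
          (fun w => ENNReal.ofReal (Real.sqrt (ζ / (2 * π * w ^ 3)) *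
            Real.exp (-(ζ * (w - m) ^ 2) / (2 * m ^ 2 * w)))) ∧
    (∫ w in Set.Ioi (0 : ℝ), w ^ (-(3 : ℝ) / 2) * Real.exp (-(a / 2) * w - 1 / (τ * w)))
      = Real.sqrt (π * τ) * Real.exp (-Real.sqrt (2 * a / τ)) := by
  have hπτ : (0:ℝ) < π * τ := mul_pos pi_pos hτ
  set s := Real.sqrt (2*a/τ) with hsdef
  have hs : 0 < s := Real.sqrt_pos.2 (by positivity)
  -- the integral identity
  have hint : (∫ w in Set.Ioi (0 : ℝ), w ^ (-(3 : ℝ) / 2) * Real.exp (-(a / 2) * w - 1 / (τ * w)))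
      = Real.sqrt (π * τ) * Real.exp (-s) := by
    have h := keyint (a/2) (1/τ) (by positivity) (by positivity)
    have e1 : ∀ w : ℝ, -(a/2 * w) - (1/τ)/w = -(a / 2) * w - 1 / (τ * w) := by
      intro w
      rw [div_div, neg_mul]
    simp_rw [e1] at h
    have e2 : π / (1/τ) = π * τ := by field_simp
    have e3 : 2 * Real.sqrt ((a/2) * (1/τ)) = s := by
      have h4 : (2 * Real.sqrt ((a/2) * (1/τ)))^2 = 2*a/τ := by
        rw [mul_pow, Real.sq_sqrt (by positivity)]
        field_simp
      rw [hsdef, ← h4, Real.sqrt_sq (by positivity)]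
    rw [e2, e3] at h
    exact h
  refine ⟨?_, hint⟩
  -- normalization constant
  have hdmeas : Measurable fun w : ℝ => (1 / τ) * Real.exp (-(1 / (τ * w))) * (1 / w ^ 2) := by
    fun_prop
  have hZ : (∫ v, Real.sqrt v * Real.exp (-(a / 2) * v)
        ∂((volume.restrict (Set.Ioi (0 : ℝ))).withDensity
          (fun u => ENNReal.ofReal ((1 / τ) * Real.exp (-(1 / (τ * u))) * (1 / u ^ 2)))))
      = Real.sqrt (π * τ) * Real.exp (-s) / τ := by
    have hcast : (fun u : ℝ => ENNReal.ofReal ((1 / τ) * Real.exp (-(1 / (τ * u))) * (1 / u ^ 2)))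
        = fun u : ℝ => (((1 / τ) * Real.exp (-(1 / (τ * u))) * (1 / u ^ 2)).toNNReal : ℝ≥0∞) :=
      rfl
    rw [hcast, integral_withDensity_eq_integral_smul (by fun_prop) _]
    have hpt : ∀ w ∈ Set.Ioi (0:ℝ),
        ((1 / τ) * Real.exp (-(1 / (τ * w))) * (1 / w ^ 2)).toNNReal •
          (Real.sqrt w * Real.exp (-(a / 2) * w))
        = (1/τ) * (w ^ (-(3:ℝ)/2) * Real.exp (-(a / 2) * w - 1 / (τ * w))) := by
      intro w hw
      have hw' : (0:ℝ) < w := hw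
      have hcoe : (((1 / τ) * Real.exp (-(1 / (τ * w))) * (1 / w ^ 2)).toNNReal : ℝ)
          = (1 / τ) * Real.exp (-(1 / (τ * w))) * (1 / w ^ 2) :=
        Real.coe_toNNReal _ (by positivity)
      have hesplit : Real.exp (-(a / 2) * w - 1 / (τ * w))
          = Real.exp (-(1 / (τ * w))) * Real.exp (-(a/2) * w) := by
        rw [← Real.exp_add]; congr 1; ring
      rw [NNReal.smul_def, hcoe, smul_eq_mul, rpow_neg32 w hw', hesplit]
      ring
    rw [setIntegral_congr_fun measurableSet_Ioi hpt, integral_const_mul, hint]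
    ring
  rw [hZ]
  -- measure equality
  rw [← withDensity_mul _ (by fun_prop) (by fun_prop)]
  apply withDensity_congr_ae
  filter_upwards [ae_restrict_mem measurableSet_Ioi] with w hw
  have hw' : (0:ℝ) < w := hw
  rw [Pi.mul_apply, ← ENNReal.ofReal_mul (by positivity)]
  congr 1
  -- real-valued density identity
  have hm2 : m^2 = 2/(τ*a) := by rw [hm, Real.sq_sqrt (by positivity)]
  have hmpos : 0 < m := by rw [hm]; exact Real.sqrt_pos.2 (by positivity)
  have ham : a * m = s := by
    have h4 : (a*m)^2 = s^2 := by
      rw [mul_pow, hm2, hsdef, Real.sq_sqrt (by positivity)]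
      field_simp
    rw [← Real.sqrt_sq (by positivity : (0:ℝ) ≤ a*m), h4, Real.sqrt_sq hs.le]
  have hsqrtfact : Real.sqrt (ζ/(2*π*w^3)) = Real.sqrt w / (Real.sqrt (π*τ) * w^2) := by
    have he : ζ/(2*π*w^3) = (Real.sqrt w / (Real.sqrt (π*τ) * w^2))^2 := by
      rw [div_pow, mul_pow, Real.sq_sqrt hw'.le, Real.sq_sqrt hπτ.le, hζ]
      field_simp
    rw [he, Real.sqrt_sq (by positivity)]
  have hexp : -(ζ*(w-m)^2)/(2*m^2*w) = (-(a/2) * w) + (-(1/(τ*w))) + s := by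
    have hwm : (w-m)^2 = w^2 - 2*m*w + 2/(τ*a) := by rw [← hm2]; ring
    rw [hζ, hwm, ← ham, hm2]
    field_simp
    ring
  rw [hsqrtfact, hexp, Real.exp_add, Real.exp_add, Real.exp_neg s]
  have hE : Real.exp s ≠ 0 := Real.exp_ne_zero s
  have hS : Real.sqrt (π*τ) ≠ 0 := by positivity
  field_simp
end
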